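/- There is no propus parameter set (5; 1, 2, 2, 1; 1) difference family in Z_5 with X_2 = X_3 and X_1 or X_4 symmetric; i.e., there do not exist subsets X_1, X_2, X_3, X_4 of Z_5 with |X_1| = |X_4| = 1, |X_2| = |X_3| = 2, X_2 = X_3, X_1 or X_4 symmetric (closed under negation), such that every nonzero element of Z_5 has exactly 1 representation as a difference within a block. -/

import Mathlib

/-- There is no cyclic propus difference family with parameters `(5; 1, 2, 2, 1; 1)`. -/
theorem stmt16 :
    ¬∃ X : Fin 4 → Finset (ZMod 5),
      (X 0).card = 1 ∧ (X 1).card = 2 ∧ (X 2).card = 2 ∧ (X 3).card = 1 ∧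
      X 1 = X 2 ∧
      ((X 0).image (fun x => -x) = X 0 ∨ (X 3).image (fun x => -x) = X 3) ∧
      (∀ a : ZMod 5, a ≠ 0 →
        ∑ j : Fin 4, (((X j) ×ˢ (X j)).filter (fun p => p.1 - p.2 = a)).card = 1) := by
  rintro ⟨X, h0, h1, h2, h3, heq, -, hsum⟩
  have h := hsum 1 (by decide)
  obtain ⟨x, hx⟩ := Finset.card_eq_one.mp h0
  obtain ⟨y, hy⟩ := Finset.card_eq_one.mp h3
  rw [Fin.sum_univ_four, hx, hy, heq] at h
  simp [Finset.filter_singleton, sub_eq_iff_eq_add, right_eq_add, (by decide : (1:ZMod 5) ≠ 0)] at h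
  omega
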